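/- Fix integers m ≥ 1, n ≥ 1, N ≥ 1, set ν = (1+n)/2 and c = (1+m)(1+n)/2, and let p* denote the uniform probability vector with p*_{i,j} = 1/((1+m)(1+n)). Then as N' → ∞, Δ_{p*}(N, N') converges to E[log((1+m)(X + ν)/(N + c))], where X ~ Binomial(N, 1/(1+m)), and this limit is strictly negative. -/

import Mathlib

open Finset

/-- Binomial(N, q) probability mass function at `x`. -/
noncomputable def binPMF (N : ℕ) (q : ℝ) (x : ℕ) : ℝ :=
  (N.choose x : ℝ) * q ^ x * (1 - q) ^ (N - x)

/-- The entropy loss `L(d, p) = ∑ᵢ ∑ⱼ pᵢⱼ log (pᵢⱼ / dᵢⱼ)`. -/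
noncomputable def entropyLoss {m n : ℕ} (d p : Fin (m+1) → Fin (n+1) → ℝ) : ℝ :=
  ∑ i, ∑ j, p i j * Real.log (p i j / d i j)

/-- Support of the Multinomial(N, p) distribution on (1+m)(1+n) cells. -/
def suppX (m n N : ℕ) : Finset (Fin (m+1) → Fin (n+1) → Fin (N+1)) :=
  Finset.univ.filter fun x => ∑ i, ∑ j, (x i j : ℕ) = N

/-- Support of the Multinomial(N', p·) distribution on 1+m cells. -/
def suppY (m N' : ℕ) : Finset (Fin (m+1) → Fin (N'+1)) :=
  Finset.univ.filter fun y => ∑ i, (y i : ℕ) = N'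

/-- Multinomial(N, p) probability of the outcome `x`. -/
noncomputable def wX {m n N : ℕ} (p : Fin (m+1) → Fin (n+1) → ℝ)
    (x : Fin (m+1) → Fin (n+1) → Fin (N+1)) : ℝ :=
  (Nat.multinomial Finset.univ (fun k : Fin (m+1) × Fin (n+1) => (x k.1 k.2 : ℕ)) : ℝ) *
    ∏ i, ∏ j, p i j ^ (x i j : ℕ)

/-- Multinomial(N', (pᵢ.)ᵢ) probability of the outcome `y`, where `pᵢ. = ∑ⱼ pᵢⱼ`. -/
noncomputable def wY {m n N' : ℕ} (p : Fin (m+1) → Fin (n+1) → ℝ)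
    (y : Fin (m+1) → Fin (N'+1)) : ℝ :=
  (Nat.multinomial Finset.univ (fun i => (y i : ℕ)) : ℝ) *
    ∏ i, (∑ j, p i j) ^ (y i : ℕ)

/-- The estimator `p̃` based on the direct observations only. -/
noncomputable def ptilde {m n N : ℕ} (x : Fin (m+1) → Fin (n+1) → Fin (N+1)) :
    Fin (m+1) → Fin (n+1) → ℝ :=
  fun i j => ((x i j : ℝ) + 1/2) / ((N : ℝ) + (1 + m) * (1 + n) / 2)

/-- The estimator `p̂` based on the direct and aggregated observations. -/
noncomputable def phat {m n N N' : ℕ} (x : Fin (m+1) → Fin (n+1) → Fin (N+1))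
    (y : Fin (m+1) → Fin (N'+1)) : Fin (m+1) → Fin (n+1) → ℝ :=
  fun i j =>
    ((((∑ j', (x i j' : ℕ)) : ℕ) : ℝ) + (y i : ℝ) + (1 + n) / 2) /
        ((N : ℝ) + (N' : ℝ) + (1 + m) * (1 + n) / 2) *
      (((x i j : ℝ) + 1/2) / ((((∑ j', (x i j' : ℕ)) : ℕ) : ℝ) + (1 + n) / 2))

/-- The risk difference `Δ_p(N, N') = E_p[L(p̂, p)] − E_p[L(p̃, p)]`, the expectation being
a finite sum over the supports of the independent multinomial observations. -/
noncomputable def riskDiff (m n : ℕ) (p : Fin (m+1) → Fin (n+1) → ℝ) (N N' : ℕ) : ℝ :=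
  ∑ x ∈ suppX m n N, ∑ y ∈ suppY m N',
    wX p x * wY p y * (entropyLoss (phat x y) p - entropyLoss (ptilde x) p)

set_option maxHeartbeats 2000000
section Aux
open Filter

lemma sum_binPMF (M : ℕ) (q : ℝ) : ∑ k ∈ range (M+1), binPMF M q k = 1 := by
  have h := add_pow q (1-q) M
  simp only [add_sub_cancel, one_pow] at h
  rw [h]
  unfold binPMF
  apply Finset.sum_congr rfl
  intro k _
  ring

lemma sum_mul_binPMF (M : ℕ) (q : ℝ) :
    ∑ k ∈ range (M+1), (k : ℝ) * binPMF M q k = M * q := by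
  cases M with
  | zero => simp
  | succ M' =>
    rw [Finset.sum_range_succ']
    simp only [Nat.cast_zero, zero_mul, add_zero]
    have key : ∀ k ∈ range (M'+1), ((k+1 : ℕ) : ℝ) * binPMF (M'+1) q (k+1)
        = ((M'+1 : ℕ) : ℝ) * q * binPMF M' q k := by
      intro k hk
      unfold binPMF
      have hc : ((k+1 : ℕ) : ℝ) * ((M'+1).choose (k+1) : ℝ)
          = ((M'+1 : ℕ) : ℝ) * (M'.choose k : ℝ) := by
        rw [← Nat.cast_mul, ← Nat.cast_mul]
        congr 1
        rw [mul_comm, Nat.add_one_mul_choose_eq, mul_comm]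
      have hsub : M' + 1 - (k+1) = M' - k := by omega
      rw [hsub]
      calc ((k+1 : ℕ) : ℝ) * ((((M'+1).choose (k+1) : ℝ)) * q ^ (k+1) * (1-q) ^ (M'-k))
          = (((k+1 : ℕ) : ℝ) * ((M'+1).choose (k+1) : ℝ)) * q ^ (k+1) * (1-q) ^ (M'-k) := by ring
        _ = (((M'+1 : ℕ) : ℝ) * (M'.choose k : ℝ)) * q ^ (k+1) * (1-q) ^ (M'-k) := by rw [hc]
        _ = ((M'+1 : ℕ) : ℝ) * q * ((M'.choose k : ℝ) * q ^ k * (1-q) ^ (M'-k)) := by ring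
    calc ∑ k ∈ range (M'+1), ((k+1 : ℕ) : ℝ) * binPMF (M'+1) q (k+1)
        = ∑ k ∈ range (M'+1), ((M'+1:ℕ) : ℝ) * q * binPMF M' q k := Finset.sum_congr rfl key
      _ = ((M'+1:ℕ) : ℝ) * q * ∑ k ∈ range (M'+1), binPMF M' q k := by rw [Finset.mul_sum]
      _ = ((M'+1:ℕ) : ℝ) * q := by rw [sum_binPMF]; ring
      _ = _ := by push_cast; ring

lemma sum_sq_mul_binPMF (M : ℕ) (q : ℝ) :
    ∑ k ∈ range (M+1), (k : ℝ) * ((k:ℝ) - 1) * binPMF M q k = M * (M-1) * q^2 := by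
  cases M with
  | zero => simp
  | succ M' =>
    rw [Finset.sum_range_succ']
    simp only [Nat.cast_zero, zero_mul, add_zero]
    have key : ∀ k ∈ range (M'+1), ((k+1 : ℕ) : ℝ) * (((k+1:ℕ):ℝ) - 1) * binPMF (M'+1) q (k+1)
        = ((M'+1 : ℕ) : ℝ) * q * ((k:ℝ) * binPMF M' q k) := by
      intro k hk
      unfold binPMF
      have hc : ((k+1 : ℕ) : ℝ) * ((M'+1).choose (k+1) : ℝ)
          = ((M'+1 : ℕ) : ℝ) * (M'.choose k : ℝ) := by
        rw [← Nat.cast_mul, ← Nat.cast_mul]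
        congr 1
        rw [mul_comm, Nat.add_one_mul_choose_eq, mul_comm]
      have hsub : M' + 1 - (k+1) = M' - k := by omega
      rw [hsub]
      have h1 : (((k+1:ℕ):ℝ) - 1) = (k:ℝ) := by push_cast; ring
      rw [h1]
      calc ((k+1 : ℕ) : ℝ) * (k:ℝ) * ((((M'+1).choose (k+1) : ℝ)) * q ^ (k+1) * (1-q) ^ (M'-k))
          = (((k+1 : ℕ) : ℝ) * ((M'+1).choose (k+1) : ℝ)) * (k:ℝ) * q ^ (k+1) * (1-q) ^ (M'-k) := by ring
        _ = (((M'+1 : ℕ) : ℝ) * (M'.choose k : ℝ)) * (k:ℝ) * q ^ (k+1) * (1-q) ^ (M'-k) := by rw [hc]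
        _ = ((M'+1 : ℕ) : ℝ) * q * ((k:ℝ) * ((M'.choose k : ℝ) * q ^ k * (1-q) ^ (M'-k))) := by ring
    calc ∑ k ∈ range (M'+1), ((k+1 : ℕ) : ℝ) * (((k+1:ℕ):ℝ)-1) * binPMF (M'+1) q (k+1)
        = ∑ k ∈ range (M'+1), ((M'+1:ℕ) : ℝ) * q * ((k:ℝ) * binPMF M' q k) := Finset.sum_congr rfl key
      _ = ((M'+1:ℕ) : ℝ) * q * ∑ k ∈ range (M'+1), (k:ℝ) * binPMF M' q k := by rw [Finset.mul_sum]
      _ = ((M'+1:ℕ) : ℝ) * q * (M' * q) := by rw [sum_mul_binPMF]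
      _ = _ := by push_cast; ring

lemma sum_var_binPMF (M : ℕ) (q : ℝ) :
    ∑ k ∈ range (M+1), binPMF M q k * ((k:ℝ) - M*q)^2 = M * q * (1-q) := by
  have e : ∀ k ∈ range (M+1), binPMF M q k * ((k:ℝ) - M*q)^2
      = (k:ℝ)*((k:ℝ)-1)*binPMF M q k + (1 - 2*(M:ℝ)*q) * ((k:ℝ) * binPMF M q k)
        + ((M:ℝ)*q)^2 * binPMF M q k := by
    intro k _; ring
  rw [Finset.sum_congr rfl e, Finset.sum_add_distrib, Finset.sum_add_distrib,
    ← Finset.mul_sum, ← Finset.mul_sum, sum_sq_mul_binPMF, sum_mul_binPMF, sum_binPMF]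
  ring

section SecB
open Nat
lemma multinomial_union' {ι : Type*} [DecidableEq ι] {s t : Finset ι} (h : Disjoint s t)
    (f : ι → ℕ) :
    Nat.multinomial (s ∪ t) f =
      (∑ i ∈ s, f i + ∑ i ∈ t, f i).choose (∑ i ∈ s, f i) *
        Nat.multinomial s f * Nat.multinomial t f := by
  have hpos : 0 < ∏ i ∈ s ∪ t, (f i)! := Finset.prod_pos fun i _ => (f i).factorial_pos
  apply Nat.eq_of_mul_eq_mul_left hpos
  conv_lhs => rw [Nat.multinomial_spec]
  rw [Finset.prod_union h, Finset.sum_union h]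
  calc (∑ i ∈ s, f i + ∑ i ∈ t, f i)!
      = (∑ i ∈ s, f i + ∑ i ∈ t, f i).choose (∑ i ∈ s, f i) * (∑ i ∈ s, f i)! * (∑ i ∈ t, f i)! :=
        by rw [Nat.choose_symm_add]
           exact (Nat.add_choose_mul_factorial_mul_factorial _ _).symm
    _ = (∑ i ∈ s, f i + ∑ i ∈ t, f i).choose (∑ i ∈ s, f i) *
          ((∏ i ∈ s, (f i)!) * Nat.multinomial s f) * ((∏ i ∈ t, (f i)!) * Nat.multinomial t f) := by
        rw [Nat.multinomial_spec, Nat.multinomial_spec]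
    _ = (∏ i ∈ s, (f i)!) * (∏ i ∈ t, (f i)!) *
          ((∑ i ∈ s, f i + ∑ i ∈ t, f i).choose (∑ i ∈ s, f i) *
            Nat.multinomial s f * Nat.multinomial t f) := by ring

lemma sum_multinomial_piAntidiag {ι : Type*} [DecidableEq ι] (s : Finset ι) (n : ℕ) :
    ∑ k ∈ Finset.piAntidiag s n, (Nat.multinomial s k : ℝ) = (s.card : ℝ) ^ n := by
  have h := Finset.sum_pow_eq_sum_piAntidiag s (fun _ => (1:ℝ)) n
  simp only [one_pow, Finset.prod_const_one, mul_one, Finset.sum_const, nsmul_eq_mul] at h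
  rw [← h]

lemma fiber_sum_multinomial {ι : Type*} [Fintype ι] [DecidableEq ι] (s : Finset ι)
    (Nn j : ℕ) (hj : j ≤ Nn) :
    ∑ k ∈ (Finset.piAntidiag (Finset.univ : Finset ι) Nn).filter
        (fun k => ∑ i ∈ s, k i = j),
      (Nat.multinomial Finset.univ k : ℝ)
    = (Nn.choose j : ℝ) * (s.card : ℝ)^j * ((sᶜ.card : ℝ))^(Nn-j) := by
  have key : ∑ k ∈ (Finset.piAntidiag (Finset.univ : Finset ι) Nn).filter
        (fun k => ∑ i ∈ s, k i = j),
      (Nat.multinomial Finset.univ k : ℝ)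
      = ∑ uv ∈ (Finset.piAntidiag s j) ×ˢ (Finset.piAntidiag sᶜ (Nn - j)),
        (Nn.choose j : ℝ) * (Nat.multinomial s uv.1 : ℝ) * (Nat.multinomial sᶜ uv.2 : ℝ) := by
    apply Finset.sum_nbij'
      (i := fun k => (fun i => if i ∈ s then k i else 0, fun i => if i ∈ s then 0 else k i))
      (j := fun uv => uv.1 + uv.2)
    · -- hi
      intro k hk
      rw [Finset.mem_filter, Finset.mem_piAntidiag] at hk
      obtain ⟨⟨hsum, -⟩, hfib⟩ := hk
      have hs : ∑ i ∈ s, (if i ∈ s then k i else 0) = j := by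
        rw [← hfib]; exact Finset.sum_congr rfl fun i hi => if_pos hi
      have hsc : ∑ i ∈ sᶜ, (if i ∈ s then 0 else k i) = Nn - j := by
        have h1 : ∑ i ∈ sᶜ, (if i ∈ s then 0 else k i) = ∑ i ∈ sᶜ, k i :=
          Finset.sum_congr rfl fun i hi => if_neg (Finset.mem_compl.mp hi)
        have h2 : ∑ i ∈ s, k i + ∑ i ∈ sᶜ, k i = Nn := by
          rw [Finset.sum_add_sum_compl]; exact hsum
        rw [h1]; omega
      rw [Finset.mem_product, Finset.mem_piAntidiag, Finset.mem_piAntidiag]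
      refine ⟨⟨hs, fun i hi => ?_⟩, hsc, fun i hi => ?_⟩
      · by_contra his; simp [his] at hi
      · by_contra his
        rw [Finset.mem_compl] at his; push_neg at his
        simp [his] at hi
    · -- hj
      rintro ⟨u, v⟩ huv
      rw [Finset.mem_product, Finset.mem_piAntidiag, Finset.mem_piAntidiag] at huv
      obtain ⟨⟨hu1, hu2⟩, hv1, hv2⟩ := huv
      have hvs : ∀ i ∈ s, v i = 0 := by
        intro i hi; by_contra h0
        exact absurd (hv2 i h0) (by simp [hi])
      have hus : ∀ i ∈ sᶜ, u i = 0 := by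
        intro i hi; by_contra h0
        exact absurd (hu2 i h0) (by simpa using hi)
      have hsum_s : ∑ i ∈ s, (u + v) i = j := by
        have : ∀ i ∈ s, (u + v) i = u i := fun i hi => by
          simp [Pi.add_apply, hvs i hi]
        rw [Finset.sum_congr rfl this, hu1]
      have hsum_sc : ∑ i ∈ sᶜ, (u + v) i = Nn - j := by
        have : ∀ i ∈ sᶜ, (u + v) i = v i := fun i hi => by
          simp [Pi.add_apply, hus i hi]
        rw [Finset.sum_congr rfl this, hv1]
      rw [Finset.mem_filter, Finset.mem_piAntidiag]
      refine ⟨⟨?_, fun i _ => Finset.mem_univ i⟩, hsum_s⟩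
      rw [← Finset.sum_add_sum_compl s (u + v), hsum_s, hsum_sc]
      omega
    · -- left inverse
      intro k hk
      funext i
      by_cases hi : i ∈ s <;> simp [hi]
    · -- right inverse
      rintro ⟨u, v⟩ huv
      rw [Finset.mem_product, Finset.mem_piAntidiag, Finset.mem_piAntidiag] at huv
      obtain ⟨⟨hu1, hu2⟩, hv1, hv2⟩ := huv
      have hvs : ∀ i ∈ s, v i = 0 := by
        intro i hi; by_contra h0
        exact absurd (hv2 i h0) (by simp [hi])
      have hus : ∀ i, i ∉ s → u i = 0 := by
        intro i hi; by_contra h0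
        exact hi (hu2 i h0)
      refine Prod.ext ?_ ?_
      · funext i
        by_cases hi : i ∈ s
        · simp [hi, hvs i hi]
        · simp [hi, hus i hi]
      · funext i
        by_cases hi : i ∈ s
        · simp [hi, hvs i hi]
        · simp [hi, hus i hi]
    · -- value equality
      intro k hk
      rw [Finset.mem_filter, Finset.mem_piAntidiag] at hk
      obtain ⟨⟨hsum, -⟩, hfib⟩ := hk
      have hdisj : Disjoint s sᶜ := disjoint_compl_right
      have huniv : s ∪ sᶜ = (Finset.univ : Finset ι) := Finset.union_compl s
      have hmn : Nat.multinomial (Finset.univ : Finset ι) k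
          = (∑ i ∈ s, k i + ∑ i ∈ sᶜ, k i).choose (∑ i ∈ s, k i) *
            Nat.multinomial s k * Nat.multinomial sᶜ k := by
        rw [← huniv, multinomial_union' hdisj]
      have h2 : ∑ i ∈ s, k i + ∑ i ∈ sᶜ, k i = Nn := by
        rw [Finset.sum_add_sum_compl]; exact hsum
      have hsc : ∑ i ∈ sᶜ, k i = Nn - j := by omega
      have hcs : Nat.multinomial s k
          = Nat.multinomial s (fun i => if i ∈ s then k i else 0) :=
        Nat.multinomial_congr fun i hi => (if_pos hi).symm
      have hcsc : Nat.multinomial sᶜ k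
          = Nat.multinomial sᶜ (fun i => if i ∈ s then 0 else k i) :=
        Nat.multinomial_congr fun i hi => (if_neg (Finset.mem_compl.mp hi)).symm
      rw [hmn, hcs, hcsc, hfib, hsc, show j + (Nn - j) = Nn from by omega]
      push_cast
      ring
  rw [key, Finset.sum_product]
  calc ∑ u ∈ Finset.piAntidiag s j, ∑ v ∈ Finset.piAntidiag sᶜ (Nn-j),
        (Nn.choose j : ℝ) * (Nat.multinomial s u : ℝ) * (Nat.multinomial sᶜ v : ℝ)
      = ∑ u ∈ Finset.piAntidiag s j, (Nn.choose j : ℝ) * (Nat.multinomial s u : ℝ) *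
          ∑ v ∈ Finset.piAntidiag sᶜ (Nn-j), (Nat.multinomial sᶜ v : ℝ) := by
        apply Finset.sum_congr rfl; intro u _; rw [Finset.mul_sum]
    _ = ∑ u ∈ Finset.piAntidiag s j, (Nn.choose j : ℝ) * (Nat.multinomial s u : ℝ) *
          ((sᶜ.card : ℝ))^(Nn-j) := by rw [sum_multinomial_piAntidiag]
    _ = (Nn.choose j : ℝ) * ((sᶜ.card : ℝ))^(Nn-j) *
          ∑ u ∈ Finset.piAntidiag s j, (Nat.multinomial s u : ℝ) := by
        rw [Finset.mul_sum]; apply Finset.sum_congr rfl; intro u _; ring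
    _ = _ := by rw [sum_multinomial_piAntidiag]; ring

lemma marginal_piAntidiag {ι : Type*} [Fintype ι] [DecidableEq ι] (s : Finset ι) (Nn : ℕ)
    (F : ℕ → ℝ) :
    ∑ k ∈ Finset.piAntidiag (Finset.univ : Finset ι) Nn,
        (Nat.multinomial Finset.univ k : ℝ) * F (∑ i ∈ s, k i)
      = ∑ j ∈ range (Nn+1),
          ((Nn.choose j : ℝ) * (s.card : ℝ)^j * ((sᶜ.card : ℝ))^(Nn-j)) * F j := by
  rw [← Finset.sum_fiberwise_of_maps_to
    (g := fun k : ι → ℕ => ∑ i ∈ s, k i) (t := range (Nn+1)) ?hmaps]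
  case hmaps =>
    intro k hk
    rw [Finset.mem_piAntidiag] at hk
    rw [Finset.mem_range, Nat.lt_succ_iff, ← hk.1]
    exact Finset.sum_le_sum_of_subset (Finset.subset_univ s)
  apply Finset.sum_congr rfl
  intro j hj
  rw [Finset.mem_range, Nat.lt_succ_iff] at hj
  have e1 : ∀ k ∈ (Finset.piAntidiag (Finset.univ : Finset ι) Nn).filter
      (fun k => ∑ i ∈ s, k i = j),
      (Nat.multinomial Finset.univ k : ℝ) * F (∑ i ∈ s, k i)
        = (Nat.multinomial Finset.univ k : ℝ) * F j := by
    intro k hk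
    rw [Finset.mem_filter] at hk
    rw [hk.2]
  rw [Finset.sum_congr rfl e1, ← Finset.sum_mul, fiber_sum_multinomial s Nn j hj]

end SecB

lemma suppY_transport (m N' : ℕ) (G : (Fin (m+1) → ℕ) → ℝ) :
    ∑ y ∈ suppY m N', G (fun i => (y i : ℕ))
      = ∑ k ∈ Finset.piAntidiag (Finset.univ : Finset (Fin (m+1))) N', G k := by
  apply Finset.sum_nbij' (i := fun y => fun i => ((y i : ℕ)))
    (j := fun k => fun i => (⟨min (k i) N', by omega⟩ : Fin (N'+1)))
  · intro y hy
    rw [suppY, Finset.mem_filter] at hy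
    rw [Finset.mem_piAntidiag]
    exact ⟨hy.2, fun i _ => Finset.mem_univ i⟩
  · intro k hk
    rw [Finset.mem_piAntidiag] at hk
    have hle : ∀ i, k i ≤ N' := by
      intro i
      rw [← hk.1]
      exact Finset.single_le_sum (fun a _ => Nat.zero_le (k a)) (Finset.mem_univ i)
    rw [suppY, Finset.mem_filter]
    refine ⟨Finset.mem_univ _, ?_⟩
    calc ∑ i, ((⟨min (k i) N', by omega⟩ : Fin (N'+1)) : ℕ) = ∑ i, k i := by
          apply Finset.sum_congr rfl; intro i _
          simp [Nat.min_eq_left (hle i)]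
      _ = N' := hk.1
  · intro y hy
    funext i
    apply Fin.ext
    simp [Nat.min_eq_left (Nat.lt_succ_iff.mp (y i).isLt)]
  · intro k hk
    rw [Finset.mem_piAntidiag] at hk
    have hle : ∀ i, k i ≤ N' := by
      intro i
      rw [← hk.1]
      exact Finset.single_le_sum (fun a _ => Nat.zero_le (k a)) (Finset.mem_univ i)
    funext i
    simp [Nat.min_eq_left (hle i)]
  · intro y _; rfl

lemma suppX_transport (m n N : ℕ) (G : (Fin (m+1) × Fin (n+1) → ℕ) → ℝ) :
    ∑ x ∈ suppX m n N, G (fun k => ((x k.1 k.2 : ℕ)))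
      = ∑ k ∈ Finset.piAntidiag (Finset.univ : Finset (Fin (m+1) × Fin (n+1))) N, G k := by
  apply Finset.sum_nbij' (i := fun x => fun k : Fin (m+1) × Fin (n+1) => ((x k.1 k.2 : ℕ)))
    (j := fun k => fun a b => (⟨min (k (a, b)) N, by omega⟩ : Fin (N+1)))
  · intro x hx
    rw [suppX, Finset.mem_filter] at hx
    rw [Finset.mem_piAntidiag]
    refine ⟨?_, fun i _ => Finset.mem_univ i⟩
    rw [Fintype.sum_prod_type]
    exact hx.2
  · intro k hk
    rw [Finset.mem_piAntidiag] at hk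
    have hle : ∀ i, k i ≤ N := by
      intro i
      rw [← hk.1]
      exact Finset.single_le_sum (fun a _ => Nat.zero_le (k a)) (Finset.mem_univ i)
    rw [suppX, Finset.mem_filter]
    refine ⟨Finset.mem_univ _, ?_⟩
    calc ∑ a, ∑ b, ((⟨min (k (a, b)) N, by omega⟩ : Fin (N+1)) : ℕ)
        = ∑ a, ∑ b, k (a, b) := by
          apply Finset.sum_congr rfl; intro a _
          apply Finset.sum_congr rfl; intro b _
          simp [Nat.min_eq_left (hle (a, b))]
      _ = N := by rw [← Fintype.sum_prod_type]; exact hk.1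
  · intro x hx
    funext a b
    apply Fin.ext
    simp [Nat.min_eq_left (Nat.lt_succ_iff.mp (x a b).isLt)]
  · intro k hk
    rw [Finset.mem_piAntidiag] at hk
    have hle : ∀ i, k i ≤ N := by
      intro i
      rw [← hk.1]
      exact Finset.single_le_sum (fun a _ => Nat.zero_le (k a)) (Finset.mem_univ i)
    funext i
    simp only []
    rw [Nat.min_eq_left (hle (i.1, i.2))]
  · intro x _; rfl

lemma EX_marginal (m n N : ℕ) (i₀ : Fin (m+1)) (F : ℕ → ℝ) :
    ∑ x ∈ suppX m n N,
        wX (fun _ _ => 1 / ((1 + (m : ℝ)) * (1 + (n : ℝ)))) x * F (∑ j, (x i₀ j : ℕ))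
      = ∑ k ∈ range (N+1), binPMF N (1 / (1 + (m : ℝ))) k * F k := by
  set q : ℝ := 1 / ((1 + (m : ℝ)) * (1 + (n : ℝ))) with hq
  clear_value q
  have hstep : ∀ x ∈ suppX m n N,
      wX (fun _ _ => q) x * F (∑ j, (x i₀ j : ℕ))
        = (Nat.multinomial Finset.univ (fun k : Fin (m+1) × Fin (n+1) => (x k.1 k.2 : ℕ)) : ℝ)
            * (q ^ N * F (∑ k ∈ ({i₀} ×ˢ (Finset.univ : Finset (Fin (n+1)))),
                (fun k : Fin (m+1) × Fin (n+1) => (x k.1 k.2 : ℕ)) k)) := by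
    intro x hx
    rw [suppX, Finset.mem_filter] at hx
    have hprod : (∏ i, ∏ j, q ^ (x i j : ℕ)) = q ^ N := by
      have : ∀ i : Fin (m+1), (∏ j, q ^ (x i j : ℕ)) = q ^ (∑ j, (x i j : ℕ)) :=
        fun i => Finset.prod_pow_eq_pow_sum _ _ _
      rw [Finset.prod_congr rfl (fun i _ => this i), Finset.prod_pow_eq_pow_sum, hx.2]
    have hrow : (∑ k ∈ ({i₀} ×ˢ (Finset.univ : Finset (Fin (n+1)))),
        (fun k : Fin (m+1) × Fin (n+1) => (x k.1 k.2 : ℕ)) k) = ∑ j, (x i₀ j : ℕ) := by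
      rw [Finset.sum_product, Finset.sum_singleton]
    rw [wX, hprod, hrow]
    ring
  rw [Finset.sum_congr rfl hstep]
  rw [suppX_transport m n N (fun k => (Nat.multinomial Finset.univ k : ℝ)
    * (q ^ N * F (∑ i ∈ ({i₀} ×ˢ (Finset.univ : Finset (Fin (n+1)))), k i)))]
  have := marginal_piAntidiag ({i₀} ×ˢ (Finset.univ : Finset (Fin (n+1)))) N
    (fun t => q ^ N * F t)
  rw [this]
  have hm0 : (1 : ℝ) + (m : ℝ) ≠ 0 := by positivity
  have hn0 : (1 : ℝ) + (n : ℝ) ≠ 0 := by positivity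
  have hcard1 : (#({i₀} ×ˢ (Finset.univ : Finset (Fin (n+1)))) : ℝ) = 1 + (n : ℝ) := by
    rw [Finset.card_product, Finset.card_singleton, Finset.card_univ, Fintype.card_fin]
    push_cast; ring
  have hcard2 : (#(({i₀} ×ˢ (Finset.univ : Finset (Fin (n+1))))ᶜ) : ℝ)
      = (m : ℝ) * (1 + (n : ℝ)) := by
    rw [Finset.card_compl, Finset.card_product, Finset.card_singleton, Finset.card_univ,
      Fintype.card_fin, Fintype.card_prod, Fintype.card_fin, Fintype.card_fin]
    have : (m+1) * (n+1) - 1 * (n+1) = m * (n+1) := by ring_nf; omega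
    rw [this]
    push_cast; ring
  apply Finset.sum_congr rfl
  intro j hj
  rw [Finset.mem_range, Nat.lt_succ_iff] at hj
  rw [hcard1, hcard2]
  have hqsplit : q ^ N = q ^ j * q ^ (N - j) := by
    rw [← pow_add]
    congr 1
    omega
  have h1 : (1 + (n : ℝ)) * q = 1 / (1 + (m : ℝ)) := by
    rw [hq]; field_simp
  have h2 : ((m : ℝ) * (1 + (n : ℝ))) * q = 1 - 1 / (1 + (m : ℝ)) := by
    rw [hq]; field_simp; ring
  have e1 : (1/(1+(m:ℝ)))^j = (1+(n:ℝ))^j * q^j := by rw [← h1, mul_pow]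
  have e2 : (1 - 1/(1+(m:ℝ)))^(N-j) = (m:ℝ)^(N-j) * (1+(n:ℝ))^(N-j) * q^(N-j) := by
    rw [← h2, mul_pow, mul_pow]
  rw [binPMF, e1, e2, hqsplit, mul_pow]
  ring

lemma EY_marginal (m n N' : ℕ) (i₀ : Fin (m+1)) (F : ℕ → ℝ) :
    ∑ y ∈ suppY m N',
        wY (n := n) (fun _ _ => 1 / ((1 + (m : ℝ)) * (1 + (n : ℝ)))) y * F (y i₀ : ℕ)
      = ∑ l ∈ range (N'+1), binPMF N' (1 / (1 + (m : ℝ))) l * F l := by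
  set q : ℝ := 1 / ((1 + (m : ℝ)) * (1 + (n : ℝ))) with hq
  clear_value q
  have hm0 : (1 : ℝ) + (m : ℝ) ≠ 0 := by positivity
  have hn0 : (1 : ℝ) + (n : ℝ) ≠ 0 := by positivity
  have hQ : ∀ i : Fin (m+1), (∑ _j : Fin (n+1), q) = 1 / (1 + (m:ℝ)) := by
    intro i
    rw [Finset.sum_const, Finset.card_univ, Fintype.card_fin, nsmul_eq_mul, hq]
    push_cast
    field_simp
    ring
  have hstep : ∀ y ∈ suppY m N',
      wY (n := n) (fun _ _ => q) y * F (y i₀ : ℕ)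
        = (Nat.multinomial Finset.univ (fun i => (y i : ℕ)) : ℝ)
            * ((1 / (1 + (m:ℝ))) ^ N' *
              F (∑ i ∈ ({i₀} : Finset (Fin (m+1))), (fun i => (y i : ℕ)) i)) := by
    intro y hy
    rw [suppY, Finset.mem_filter] at hy
    have hprod : (∏ i, (∑ _j : Fin (n+1), q) ^ (y i : ℕ)) = (1 / (1 + (m:ℝ))) ^ N' := by
      rw [Finset.prod_congr rfl (fun i _ => by rw [hQ i]), Finset.prod_pow_eq_pow_sum, hy.2]
    rw [wY, hprod, Finset.sum_singleton]
    ring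
  rw [Finset.sum_congr rfl hstep]
  rw [suppY_transport m N' (fun k => (Nat.multinomial Finset.univ k : ℝ)
    * ((1 / (1 + (m:ℝ))) ^ N' * F (∑ i ∈ ({i₀} : Finset (Fin (m+1))), k i)))]
  rw [marginal_piAntidiag ({i₀} : Finset (Fin (m+1))) N' (fun t => (1 / (1 + (m:ℝ))) ^ N' * F t)]
  have hcard1 : (#({i₀} : Finset (Fin (m+1))) : ℝ) = 1 := by
    rw [Finset.card_singleton]; norm_num
  have hcard2 : (#(({i₀} : Finset (Fin (m+1)))ᶜ) : ℝ) = (m : ℝ) := by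
    rw [Finset.card_compl, Finset.card_singleton, Fintype.card_fin]
    push_cast [Nat.add_sub_cancel]
    ring
  apply Finset.sum_congr rfl
  intro l hl
  rw [Finset.mem_range, Nat.lt_succ_iff] at hl
  rw [hcard1, hcard2]
  have hqsplit : (1 / (1 + (m:ℝ))) ^ N' = (1/(1+(m:ℝ))) ^ l * (1/(1+(m:ℝ))) ^ (N' - l) := by
    rw [← pow_add]; congr 1; omega
  have h2 : (m : ℝ) * (1/(1+(m:ℝ))) = 1 - 1/(1+(m:ℝ)) := by field_simp; ring
  have e2 : (1 - 1/(1+(m:ℝ)))^(N'-l) = (m:ℝ)^(N'-l) * (1/(1+(m:ℝ)))^(N'-l) := by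
    rw [← h2, mul_pow]
  rw [binPMF, e2, hqsplit, one_pow]
  ring

lemma binPMF_conv (N N' : ℕ) (q : ℝ) (F : ℕ → ℝ) :
    ∑ k ∈ range (N+1), ∑ l ∈ range (N'+1), binPMF N q k * binPMF N' q l * F (k+l)
      = ∑ s ∈ range (N+N'+1), binPMF (N+N') q s * F s := by
  rw [← Finset.sum_product']
  rw [← Finset.sum_fiberwise_of_maps_to
    (g := fun kl : ℕ × ℕ => kl.1 + kl.2) (t := range (N+N'+1)) ?hmaps]
  case hmaps =>
    rintro ⟨k, l⟩ hkl
    rw [Finset.mem_product, Finset.mem_range, Finset.mem_range] at hkl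
    rw [Finset.mem_range]
    dsimp only
    omega
  apply Finset.sum_congr rfl
  intro s hs
  rw [Finset.mem_range, Nat.lt_succ_iff] at hs
  have e1 : ∀ kl ∈ (range (N+1) ×ˢ range (N'+1)).filter (fun kl : ℕ × ℕ => kl.1 + kl.2 = s),
      binPMF N q kl.1 * binPMF N' q kl.2 * F (kl.1 + kl.2)
        = ((N.choose kl.1 : ℝ) * (N'.choose kl.2 : ℝ)) * (q^s * (1-q)^(N+N'-s) * F s) := by
    rintro ⟨k, l⟩ hkl
    rw [Finset.mem_filter, Finset.mem_product, Finset.mem_range, Finset.mem_range] at hkl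
    obtain ⟨⟨hk, hl⟩, hsum⟩ := hkl
    simp only at hsum ⊢
    calc binPMF N q k * binPMF N' q l * F (k+l)
        = ((N.choose k : ℝ) * (N'.choose l : ℝ))
            * (q^(k+l) * (1-q)^((N-k)+(N'-l)) * F (k+l)) := by
          rw [binPMF, binPMF, pow_add, pow_add]; ring
      _ = _ := by
          rw [hsum, show (N-k)+(N'-l) = N+N'-s from by omega]
  rw [Finset.sum_congr rfl e1, ← Finset.sum_mul]
  have hcast : ∑ kl ∈ (range (N+1) ×ˢ range (N'+1)).filter (fun kl : ℕ × ℕ => kl.1 + kl.2 = s),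
      (N.choose kl.1 : ℝ) * (N'.choose kl.2 : ℝ) = (((N+N').choose s : ℕ) : ℝ) := by
    rw [Finset.sum_subset (s₁ := (range (N+1) ×ˢ range (N'+1)).filter
        (fun kl : ℕ × ℕ => kl.1 + kl.2 = s)) (s₂ := Finset.HasAntidiagonal.antidiagonal s) ?hsub ?hzero]
    · rw [Nat.add_choose_eq]
      push_cast
      rfl
    case hsub =>
      rintro ⟨k, l⟩ hkl
      rw [Finset.mem_filter] at hkl
      rw [Finset.HasAntidiagonal.mem_antidiagonal]
      exact hkl.2
    case hzero =>
      rintro ⟨k, l⟩ hkl hnot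
      rw [Finset.HasAntidiagonal.mem_antidiagonal] at hkl
      rw [Finset.mem_filter, Finset.mem_product, Finset.mem_range, Finset.mem_range] at hnot
      simp only at hkl ⊢
      have : N < k ∨ N' < l := by omega
      rcases this with h | h
      · rw [Nat.choose_eq_zero_of_lt h]; norm_num
      · rw [Nat.choose_eq_zero_of_lt h]; norm_num
  rw [hcast, binPMF]
  ring

noncomputable def Bfun (m n M : ℕ) : ℝ :=
  ∑ s ∈ range (M+1), binPMF M (1 / (1 + (m:ℝ))) s *
    Real.log ((1 + (m : ℝ)) * ((s : ℝ) + (1 + (n:ℝ)) / 2) /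
      ((M : ℝ) + (1 + (m:ℝ)) * (1 + (n:ℝ)) / 2))

section params
variable (m n : ℕ)

lemma hQpos : (0:ℝ) < 1 / (1 + (m:ℝ)) := by positivity

lemma hQle1 : 1 / (1 + (m:ℝ)) ≤ 1 := by
  rw [div_le_one (by positivity)]
  simp [Nat.cast_nonneg]

lemma binPMF_nonneg (M s : ℕ) : 0 ≤ binPMF M (1 / (1 + (m:ℝ))) s := by
  have h1 := hQpos m
  have h2 := hQle1 m
  unfold binPMF
  have : (0:ℝ) ≤ 1 - 1/(1+(m:ℝ)) := by linarith
  positivity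

lemma hMc_pos (M : ℕ) : (0:ℝ) < (M : ℝ) + (1 + (m:ℝ)) * (1 + (n:ℝ)) / 2 := by positivity

lemma Tpos (M s : ℕ) :
    (0:ℝ) < (1 + (m : ℝ)) * ((s : ℝ) + (1 + (n:ℝ)) / 2) /
      ((M : ℝ) + (1 + (m:ℝ)) * (1 + (n:ℝ)) / 2) := by positivity

lemma sumT (M : ℕ) :
    ∑ s ∈ range (M+1), binPMF M (1 / (1 + (m:ℝ))) s *
      ((1 + (m : ℝ)) * ((s : ℝ) + (1 + (n:ℝ)) / 2) /
        ((M : ℝ) + (1 + (m:ℝ)) * (1 + (n:ℝ)) / 2)) = 1 := by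
  have hMc := hMc_pos m n M
  have e : ∀ s ∈ range (M+1), binPMF M (1 / (1 + (m:ℝ))) s *
      ((1 + (m : ℝ)) * ((s : ℝ) + (1 + (n:ℝ)) / 2) /
        ((M : ℝ) + (1 + (m:ℝ)) * (1 + (n:ℝ)) / 2))
      = ((1 + (m:ℝ)) / ((M : ℝ) + (1 + (m:ℝ)) * (1 + (n:ℝ)) / 2)) *
          ((s:ℝ) * binPMF M (1 / (1 + (m:ℝ))) s)
        + ((1 + (m:ℝ)) * ((1 + (n:ℝ))/2) / ((M : ℝ) + (1 + (m:ℝ)) * (1 + (n:ℝ)) / 2)) *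
          binPMF M (1 / (1 + (m:ℝ))) s := by
    intro s _
    field_simp
  rw [Finset.sum_congr rfl e, Finset.sum_add_distrib, ← Finset.mul_sum, ← Finset.mul_sum,
    sum_mul_binPMF, sum_binPMF]
  have hm0 : (1:ℝ) + (m:ℝ) ≠ 0 := by positivity
  field_simp

lemma Bfun_nonpos (M : ℕ) : Bfun m n M ≤ 0 := by
  have h := sumT m n M
  have hub : Bfun m n M ≤ ∑ s ∈ range (M+1), binPMF M (1 / (1 + (m:ℝ))) s *
      ((1 + (m : ℝ)) * ((s : ℝ) + (1 + (n:ℝ)) / 2) /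
        ((M : ℝ) + (1 + (m:ℝ)) * (1 + (n:ℝ)) / 2) - 1) := by
    unfold Bfun
    apply Finset.sum_le_sum
    intro s _
    apply mul_le_mul_of_nonneg_left _ (binPMF_nonneg m M s)
    exact Real.log_le_sub_one_of_pos (Tpos m n M s)
  have : ∑ s ∈ range (M+1), binPMF M (1 / (1 + (m:ℝ))) s *
      ((1 + (m : ℝ)) * ((s : ℝ) + (1 + (n:ℝ)) / 2) /
        ((M : ℝ) + (1 + (m:ℝ)) * (1 + (n:ℝ)) / 2) - 1) = 0 := by
    have e : ∀ s ∈ range (M+1), binPMF M (1 / (1 + (m:ℝ))) s *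
        ((1 + (m : ℝ)) * ((s : ℝ) + (1 + (n:ℝ)) / 2) /
          ((M : ℝ) + (1 + (m:ℝ)) * (1 + (n:ℝ)) / 2) - 1)
        = binPMF M (1 / (1 + (m:ℝ))) s *
          ((1 + (m : ℝ)) * ((s : ℝ) + (1 + (n:ℝ)) / 2) /
            ((M : ℝ) + (1 + (m:ℝ)) * (1 + (n:ℝ)) / 2))
          - binPMF M (1 / (1 + (m:ℝ))) s := by
      intro s _; ring
    rw [Finset.sum_congr rfl e, Finset.sum_sub_distrib, sumT, sum_binPMF]
    ring
  linarith

lemma A_neg (N : ℕ) (hm : 1 ≤ m) (hN : 1 ≤ N) : Bfun m n N < 0 := by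
  have h := sumT m n N
  have hub : Bfun m n N < ∑ s ∈ range (N+1), binPMF N (1 / (1 + (m:ℝ))) s *
      ((1 + (m : ℝ)) * ((s : ℝ) + (1 + (n:ℝ)) / 2) /
        ((N : ℝ) + (1 + (m:ℝ)) * (1 + (n:ℝ)) / 2) - 1) := by
    unfold Bfun
    refine Finset.sum_lt_sum (fun s _ => ?_) ⟨0, Finset.mem_range.mpr (by omega), ?_⟩
    · apply mul_le_mul_of_nonneg_left _ (binPMF_nonneg m N s)
      exact Real.log_le_sub_one_of_pos (Tpos m n N s)
    · have hp0 : 0 < binPMF N (1 / (1 + (m:ℝ))) 0 := by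
        unfold binPMF
        have h1 : (0:ℝ) < 1 - 1/(1+(m:ℝ)) := by
          rw [sub_pos, div_lt_one (by positivity)]
          have : (1:ℝ) ≤ (m:ℝ) := by exact_mod_cast hm
          linarith
        simp only [Nat.choose_zero_right, pow_zero, Nat.cast_one]
        positivity
      apply mul_lt_mul_of_pos_left _ hp0
      apply Real.log_lt_sub_one_of_pos (Tpos m n N 0)
      -- T at 0 is ≠ 1
      have hMc := hMc_pos m n N
      intro heq
      rw [div_eq_one_iff_eq (ne_of_gt hMc)] at heq
      have hN1 : (1:ℝ) ≤ (N:ℝ) := by exact_mod_cast hN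
      simp only [Nat.cast_zero, zero_add] at heq
      nlinarith
  have : ∑ s ∈ range (N+1), binPMF N (1 / (1 + (m:ℝ))) s *
      ((1 + (m : ℝ)) * ((s : ℝ) + (1 + (n:ℝ)) / 2) /
        ((N : ℝ) + (1 + (m:ℝ)) * (1 + (n:ℝ)) / 2) - 1) = 0 := by
    have e : ∀ s ∈ range (N+1), binPMF N (1 / (1 + (m:ℝ))) s *
        ((1 + (m : ℝ)) * ((s : ℝ) + (1 + (n:ℝ)) / 2) /
          ((N : ℝ) + (1 + (m:ℝ)) * (1 + (n:ℝ)) / 2) - 1)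
        = binPMF N (1 / (1 + (m:ℝ))) s *
          ((1 + (m : ℝ)) * ((s : ℝ) + (1 + (n:ℝ)) / 2) /
            ((N : ℝ) + (1 + (m:ℝ)) * (1 + (n:ℝ)) / 2))
          - binPMF N (1 / (1 + (m:ℝ))) s := by
      intro s _; ring
    rw [Finset.sum_congr rfl e, Finset.sum_sub_distrib, sumT, sum_binPMF]
    ring
  linarith

end params

lemma ratlim (a b c : ℝ) :
    Tendsto (fun M : ℕ => (a*(M:ℝ)+b)/((M:ℝ)+c)) atTop (nhds a) := by
  have h1 : Tendsto (fun M : ℕ => (M:ℝ)+c) atTop atTop :=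
    tendsto_atTop_add_const_right atTop c tendsto_natCast_atTop_atTop
  have h2 : Tendsto (fun M : ℕ => (b - a*c)/((M:ℝ)+c)) atTop (nhds 0) :=
    Tendsto.div_atTop tendsto_const_nhds h1
  have h3 : Tendsto (fun M : ℕ => a + (b - a*c)/((M:ℝ)+c)) atTop (nhds (a+0)) :=
    tendsto_const_nhds.add h2
  rw [add_zero] at h3
  apply h3.congr'
  filter_upwards [h1.eventually_gt_atTop 0] with M hM
  field_simp
  ring

lemma loglim (c : ℝ) :
    Tendsto (fun M : ℕ => Real.log ((M:ℝ)+c) / (M:ℝ)) atTop (nhds 0) := by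
  have h1 : Tendsto (fun M : ℕ => (M:ℝ)+c) atTop atTop :=
    tendsto_atTop_add_const_right atTop c tendsto_natCast_atTop_atTop
  have h0 := Real.tendsto_pow_log_div_mul_add_atTop 1 (-c) 1 one_ne_zero
  have h2 := h0.comp h1
  apply h2.congr
  intro M
  simp only [Function.comp_apply, pow_one]
  congr 1
  ring

lemma Bfun_lower (m n M : ℕ) (hM : 1 ≤ M) (δ : ℝ) (hδpos : 0 < δ)
    (hδQ : δ < 1/(1+(m:ℝ)))
    (hL : Real.log (((1+(m:ℝ))*(1/(1+(m:ℝ)) - δ)*(M:ℝ) + (1+(m:ℝ))*((1+(n:ℝ))/2)) /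
      ((M:ℝ)+(1+(m:ℝ))*(1+(n:ℝ))/2)) ≤ 0)
    (hK : Real.log ((1+(m:ℝ))*((1+(n:ℝ))/2)/((M:ℝ)+(1+(m:ℝ))*(1+(n:ℝ))/2)) ≤ 0) :
    Real.log (((1+(m:ℝ))*(1/(1+(m:ℝ)) - δ)*(M:ℝ) + (1+(m:ℝ))*((1+(n:ℝ))/2)) /
        ((M:ℝ)+(1+(m:ℝ))*(1+(n:ℝ))/2))
      + Real.log ((1+(m:ℝ))*((1+(n:ℝ))/2)/((M:ℝ)+(1+(m:ℝ))*(1+(n:ℝ))/2)) / (4*δ^2*(M:ℝ))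
      ≤ Bfun m n M := by
  classical
  have hm0 : (0:ℝ) < 1 + (m:ℝ) := by positivity
  have hn0 : (0:ℝ) < 1 + (n:ℝ) := by positivity
  have hMpos : (0:ℝ) < (M:ℝ) := by exact_mod_cast hM
  have hMc : (0:ℝ) < (M:ℝ) + (1+(m:ℝ))*(1+(n:ℝ))/2 := by positivity
  set Q : ℝ := 1/(1+(m:ℝ)) with hQdef
  set ν : ℝ := (1+(n:ℝ))/2 with hνdef
  set D : ℝ := (M:ℝ)+(1+(m:ℝ))*(1+(n:ℝ))/2 with hDdef
  set L : ℝ := Real.log (((1+(m:ℝ))*(Q - δ)*(M:ℝ) + (1+(m:ℝ))*ν) / D) with hLdef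
  set K : ℝ := Real.log ((1+(m:ℝ))*ν/D) with hKdef
  have hQpos : 0 < Q := by rw [hQdef]; positivity
  have hνpos : 0 < ν := by rw [hνdef]; positivity
  have hQδ : 0 < Q - δ := by linarith
  have hQ14 : Q * (1 - Q) ≤ 1/4 := by nlinarith [sq_nonneg (Q - 1/2)]
  have hTpos : ∀ s : ℕ, (0:ℝ) < (1 + (m : ℝ)) * ((s : ℝ) + ν) / D := fun s => by positivity
  have hsumpmf : ∑ s ∈ range (M+1), binPMF M Q s = 1 := sum_binPMF M Q
  have hpmfnn : ∀ s, 0 ≤ binPMF M Q s := fun s => binPMF_nonneg m M s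
  have hBody : Bfun m n M = ∑ s ∈ range (M+1),
      binPMF M Q s * Real.log ((1 + (m : ℝ)) * ((s : ℝ) + ν) / D) := rfl
  rw [hBody, ← Finset.sum_filter_add_sum_filter_not (range (M+1))
    (fun s : ℕ => (Q - δ)*(M:ℝ) ≤ (s:ℝ))]
  -- good part
  have hgood : L ≤ ∑ s ∈ (range (M+1)).filter (fun s : ℕ => (Q - δ)*(M:ℝ) ≤ (s:ℝ)),
      binPMF M Q s * Real.log ((1 + (m : ℝ)) * ((s : ℝ) + ν) / D) := by
    have h1 : ∀ s ∈ (range (M+1)).filter (fun s : ℕ => (Q - δ)*(M:ℝ) ≤ (s:ℝ)),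
        binPMF M Q s * L ≤ binPMF M Q s * Real.log ((1 + (m : ℝ)) * ((s : ℝ) + ν) / D) := by
      intro s hs
      rw [Finset.mem_filter] at hs
      apply mul_le_mul_of_nonneg_left _ (hpmfnn s)
      rw [hLdef]
      apply Real.log_le_log (by positivity)
      gcongr
      nlinarith [hs.2]
    have h2 : ∑ s ∈ (range (M+1)).filter (fun s : ℕ => (Q - δ)*(M:ℝ) ≤ (s:ℝ)),
        binPMF M Q s * L
        = (∑ s ∈ (range (M+1)).filter (fun s : ℕ => (Q - δ)*(M:ℝ) ≤ (s:ℝ)), binPMF M Q s) * L := by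
      rw [Finset.sum_mul]
    have h3 : ∑ s ∈ (range (M+1)).filter (fun s : ℕ => (Q - δ)*(M:ℝ) ≤ (s:ℝ)), binPMF M Q s ≤ 1 := by
      rw [← hsumpmf]
      exact Finset.sum_le_sum_of_subset_of_nonneg (Finset.filter_subset _ _)
        (fun s _ _ => hpmfnn s)
    calc L = 1 * L := (one_mul L).symm
      _ ≤ (∑ s ∈ (range (M+1)).filter (fun s : ℕ => (Q - δ)*(M:ℝ) ≤ (s:ℝ)), binPMF M Q s) * L :=
          mul_le_mul_of_nonpos_right h3 hL
      _ = ∑ s ∈ (range (M+1)).filter (fun s : ℕ => (Q - δ)*(M:ℝ) ≤ (s:ℝ)), binPMF M Q s * L :=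
          h2.symm
      _ ≤ _ := Finset.sum_le_sum h1
  -- Chebyshev
  have hPb : ∑ s ∈ (range (M+1)).filter (fun s : ℕ => ¬ (Q - δ)*(M:ℝ) ≤ (s:ℝ)), binPMF M Q s
      ≤ 1/(4*δ^2*(M:ℝ)) := by
    have step1 : ∀ s ∈ (range (M+1)).filter (fun s : ℕ => ¬ (Q - δ)*(M:ℝ) ≤ (s:ℝ)),
        binPMF M Q s ≤ binPMF M Q s * (((s:ℝ) - (M:ℝ)*Q)^2/((δ*(M:ℝ))^2)) := by
      intro s hs
      rw [Finset.mem_filter, not_le] at hs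
      apply le_mul_of_one_le_right (hpmfnn s)
      rw [one_le_div (pow_pos (mul_pos hδpos hMpos) 2)]
      have hexp : (Q-δ)*(M:ℝ) = Q*(M:ℝ) - δ*(M:ℝ) := by ring
      have h5 : δ*(M:ℝ) < Q*(M:ℝ) - (s:ℝ) := by
        rw [hexp] at hs
        linarith [hs.2]
      have h6 : (δ*(M:ℝ))*(δ*(M:ℝ)) ≤ (Q*(M:ℝ) - (s:ℝ))*(Q*(M:ℝ) - (s:ℝ)) :=
        mul_self_le_mul_self (le_of_lt (mul_pos hδpos hMpos)) h5.le
      nlinarith [h6]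
    have step2 : ∑ s ∈ (range (M+1)).filter (fun s : ℕ => ¬ (Q - δ)*(M:ℝ) ≤ (s:ℝ)),
        binPMF M Q s * (((s:ℝ) - (M:ℝ)*Q)^2/((δ*(M:ℝ))^2))
        ≤ ∑ s ∈ range (M+1), binPMF M Q s * (((s:ℝ) - (M:ℝ)*Q)^2/((δ*(M:ℝ))^2)) :=
      Finset.sum_le_sum_of_subset_of_nonneg (Finset.filter_subset _ _)
        (fun s _ _ => mul_nonneg (hpmfnn s) (by positivity))
    have step3 : ∑ s ∈ range (M+1), binPMF M Q s * (((s:ℝ) - (M:ℝ)*Q)^2/((δ*(M:ℝ))^2))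
        = ((M:ℝ) * Q * (1-Q)) / ((δ*(M:ℝ))^2) := by
      have e : ∀ s ∈ range (M+1), binPMF M Q s * (((s:ℝ) - (M:ℝ)*Q)^2/((δ*(M:ℝ))^2))
          = (binPMF M Q s * ((s:ℝ) - (M:ℝ)*Q)^2) * (1/((δ*(M:ℝ))^2)) := by
        intro s _; ring
      rw [Finset.sum_congr rfl e, ← Finset.sum_mul, sum_var_binPMF]
      ring
    have step4 : ((M:ℝ) * Q * (1-Q)) / ((δ*(M:ℝ))^2) ≤ 1/(4*δ^2*(M:ℝ)) := by
      rw [div_le_div_iff₀ (by positivity) (by positivity)]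
      have h4 : 4*δ^2*(M:ℝ)^2 * (Q * (1-Q)) ≤ 4*δ^2*(M:ℝ)^2 * (1/4) :=
        mul_le_mul_of_nonneg_left hQ14 (by positivity)
      nlinarith [h4]
    calc ∑ s ∈ (range (M+1)).filter (fun s : ℕ => ¬ (Q - δ)*(M:ℝ) ≤ (s:ℝ)), binPMF M Q s
        ≤ ∑ s ∈ (range (M+1)).filter (fun s : ℕ => ¬ (Q - δ)*(M:ℝ) ≤ (s:ℝ)),
            binPMF M Q s * (((s:ℝ) - (M:ℝ)*Q)^2/((δ*(M:ℝ))^2)) := Finset.sum_le_sum step1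
      _ ≤ _ := step2
      _ = _ := step3
      _ ≤ _ := step4
  -- bad part
  have hbad : K / (4*δ^2*(M:ℝ)) ≤ ∑ s ∈ (range (M+1)).filter
      (fun s : ℕ => ¬ (Q - δ)*(M:ℝ) ≤ (s:ℝ)),
      binPMF M Q s * Real.log ((1 + (m : ℝ)) * ((s : ℝ) + ν) / D) := by
    have h1 : ∀ s ∈ (range (M+1)).filter (fun s : ℕ => ¬ (Q - δ)*(M:ℝ) ≤ (s:ℝ)),
        binPMF M Q s * K ≤ binPMF M Q s * Real.log ((1 + (m : ℝ)) * ((s : ℝ) + ν) / D) := by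
      intro s _
      apply mul_le_mul_of_nonneg_left _ (hpmfnn s)
      rw [hKdef]
      apply Real.log_le_log (by positivity)
      gcongr <;> first | positivity | linarith [show (0:ℝ) ≤ (s:ℝ) from Nat.cast_nonneg s]
    calc K / (4*δ^2*(M:ℝ)) = (1/(4*δ^2*(M:ℝ))) * K := by ring
      _ ≤ (∑ s ∈ (range (M+1)).filter (fun s : ℕ => ¬ (Q - δ)*(M:ℝ) ≤ (s:ℝ)), binPMF M Q s) * K :=
          mul_le_mul_of_nonpos_right hPb hK
      _ = ∑ s ∈ (range (M+1)).filter (fun s : ℕ => ¬ (Q - δ)*(M:ℝ) ≤ (s:ℝ)), binPMF M Q s * K := by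
          rw [Finset.sum_mul]
      _ ≤ _ := Finset.sum_le_sum h1
  linarith

lemma Bfun_tendsto (m n : ℕ) : Tendsto (fun M : ℕ => Bfun m n M) atTop (nhds 0) := by
  have hm0 : (0:ℝ) < 1 + (m:ℝ) := by positivity
  have hn0 : (0:ℝ) < 1 + (n:ℝ) := by positivity
  have hQm : (1+(m:ℝ)) * (1/(1+(m:ℝ))) = 1 := by field_simp
  rw [Metric.tendsto_atTop]
  intro ε hε
  set Q : ℝ := 1/(1+(m:ℝ)) with hQdef
  have hQpos : 0 < Q := by rw [hQdef]; positivity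
  set ν : ℝ := (1+(n:ℝ))/2 with hνdef
  have hνpos : 0 < ν := by rw [hνdef]; positivity
  set c : ℝ := (1+(m:ℝ))*(1+(n:ℝ))/2 with hcdef
  have hcpos : 0 < c := by rw [hcdef]; positivity
  set δ : ℝ := Q * (1 - Real.exp (-(ε/2))) with hδdef
  have hexplt : Real.exp (-(ε/2)) < 1 := by
    rw [show (1:ℝ) = Real.exp 0 from (Real.exp_zero).symm]
    exact Real.exp_lt_exp.mpr (by linarith)
  have hexppos : 0 < Real.exp (-(ε/2)) := Real.exp_pos _
  have hδpos : 0 < δ := by rw [hδdef]; nlinarith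
  have hδQ : δ < Q := by rw [hδdef]; nlinarith
  have ha : (1+(m:ℝ))*(Q - δ) = Real.exp (-(ε/2)) := by
    have h1 : Q - δ = Q * Real.exp (-(ε/2)) := by rw [hδdef]; ring
    rw [h1, ← mul_assoc, hQm, one_mul]
  -- the L-limit
  have hLlim : Tendsto (fun M : ℕ =>
      Real.log (((1+(m:ℝ))*(Q-δ)*(M:ℝ) + (1+(m:ℝ))*ν)/((M:ℝ)+c))) atTop
      (nhds (-(ε/2))) := by
    have h1 := ratlim ((1+(m:ℝ))*(Q-δ)) ((1+(m:ℝ))*ν) c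
    have h2 : ((1+(m:ℝ))*(Q-δ)) ≠ 0 := by rw [ha]; exact ne_of_gt hexppos
    have h3 := ((Real.continuousAt_log h2).tendsto).comp h1
    have h4 : Real.log ((1+(m:ℝ))*(Q-δ)) = -(ε/2) := by rw [ha, Real.log_exp]
    rw [h4] at h3
    exact h3
  have E1 : ∀ᶠ M : ℕ in atTop,
      Real.log (((1+(m:ℝ))*(Q-δ)*(M:ℝ) + (1+(m:ℝ))*ν)/((M:ℝ)+c)) ∈
        Set.Ioo (-(3*ε/4)) 0 :=
    hLlim.eventually (Ioo_mem_nhds (by linarith) (by linarith))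
  -- the K/(4δ²M) limit
  have hk2lim : Tendsto (fun M : ℕ =>
      Real.log ((1+(m:ℝ))*ν/((M:ℝ)+c)) / (4*δ^2*(M:ℝ))) atTop (nhds 0) := by
    have t1 : Tendsto (fun M : ℕ =>
        (Real.log ((1+(m:ℝ))*ν) / (4*δ^2)) * (1/(M:ℝ))) atTop (nhds 0) := by
      have := tendsto_one_div_atTop_nhds_zero_nat.const_mul
        (Real.log ((1+(m:ℝ))*ν) / (4*δ^2))
      simpa using this
    have t2 : Tendsto (fun M : ℕ =>
        (1/(4*δ^2)) * (Real.log ((M:ℝ)+c)/(M:ℝ))) atTop (nhds 0) := by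
      have := (loglim c).const_mul (1/(4*δ^2))
      simpa using this
    have t3 := t1.sub t2
    rw [sub_zero] at t3
    apply t3.congr'
    filter_upwards [eventually_ge_atTop 1] with M hM
    have hMpos : (0:ℝ) < (M:ℝ) := by exact_mod_cast hM
    rw [Real.log_div (by positivity) (by positivity)]
    field_simp
    try ring
  have E2 : ∀ᶠ M : ℕ in atTop,
      |Real.log ((1+(m:ℝ))*ν/((M:ℝ)+c)) / (4*δ^2*(M:ℝ))| < ε/4 := by
    have h := Metric.tendsto_atTop.mp hk2lim (ε/4) (by linarith)
    obtain ⟨M₀, hM₀⟩ := h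
    rw [eventually_atTop]
    exact ⟨M₀, fun M hM => by
      have := hM₀ M hM
      rwa [Real.dist_eq, sub_zero] at this⟩
  have E3 : ∀ᶠ M : ℕ in atTop,
      Real.log ((1+(m:ℝ))*ν/((M:ℝ)+c)) ≤ 0 := by
    filter_upwards [eventually_ge_atTop ⌈(1+(m:ℝ))*ν⌉₊] with M hM
    have hMν : (1+(m:ℝ))*ν ≤ (M:ℝ) := le_trans (Nat.le_ceil _) (by exact_mod_cast hM)
    apply Real.log_nonpos (by positivity)
    rw [div_le_one (by positivity)]
    linarith
  have E4 : ∀ᶠ M : ℕ in atTop, 1 ≤ M := eventually_ge_atTop 1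
  have hall := ((E1.and E2).and (E3.and E4))
  rw [eventually_atTop] at hall
  obtain ⟨M₀, hM₀⟩ := hall
  refine ⟨M₀, fun M hM => ?_⟩
  obtain ⟨⟨h1, h2⟩, h3, h4⟩ := hM₀ M hM
  rw [Real.dist_eq, sub_zero, abs_of_nonpos (Bfun_nonpos m n M)]
  have hlow := Bfun_lower m n M h4 δ hδpos hδQ (le_of_lt h1.2) h3
  have habs := abs_lt.mp h2
  obtain ⟨h1a, _⟩ := h1
  linarith [hlow]

-- algebraic log helper
lemma log_alg (mR a S R D1 D2 q : ℝ) (hm : 0 < mR) (ha : 0 < a) (hS : 0 < S) (hR : 0 < R)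
    (hD1 : 0 < D1) (hD2 : 0 < D2) (hq : 0 < q) :
    q * Real.log (q / (R/D2 * (a/S))) - q * Real.log (q / (a/D1))
      = q * (Real.log (mR * S / D1) - Real.log (mR * R / D2)) := by
  rw [Real.log_div (ne_of_gt hq) (by positivity),
    Real.log_div (ne_of_gt hq) (by positivity),
    Real.log_mul (by positivity) (by positivity),
    Real.log_div (ne_of_gt hR) (ne_of_gt hD2),
    Real.log_div (ne_of_gt ha) (ne_of_gt hS),
    Real.log_div (ne_of_gt ha) (ne_of_gt hD1),
    Real.log_div (by positivity) (ne_of_gt hD1),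
    Real.log_div (by positivity) (ne_of_gt hD2),
    Real.log_mul (ne_of_gt hm) (ne_of_gt hS),
    Real.log_mul (ne_of_gt hm) (ne_of_gt hR)]
  ring

lemma entropy_diff (m n N N' : ℕ) (x : Fin (m+1) → Fin (n+1) → Fin (N+1))
    (y : Fin (m+1) → Fin (N'+1)) :
    entropyLoss (phat x y) (fun _ _ => 1 / ((1 + (m : ℝ)) * (1 + (n : ℝ))))
        - entropyLoss (ptilde x) (fun _ _ => 1 / ((1 + (m : ℝ)) * (1 + (n : ℝ))))
      = ∑ i, (1/(1+(m:ℝ))) *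
          (Real.log ((1 + (m : ℝ)) * ((((∑ j', (x i j' : ℕ)) : ℕ) : ℝ) + (1 + (n:ℝ)) / 2) /
              ((N : ℝ) + (1 + (m:ℝ)) * (1 + (n:ℝ)) / 2))
           - Real.log ((1 + (m : ℝ)) * ((((∑ j', (x i j' : ℕ)) + (y i : ℕ) : ℕ) : ℝ)
                + (1 + (n:ℝ)) / 2) /
              (((N + N' : ℕ) : ℝ) + (1 + (m:ℝ)) * (1 + (n:ℝ)) / 2))) := by
  have hm0 : (0:ℝ) < 1 + (m:ℝ) := by positivity
  have hn0 : (0:ℝ) < 1 + (n:ℝ) := by positivity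
  have hq : (0:ℝ) < 1 / ((1 + (m : ℝ)) * (1 + (n : ℝ))) := by positivity
  rw [entropyLoss, entropyLoss, ← Finset.sum_sub_distrib]
  apply Finset.sum_congr rfl
  intro i _
  rw [← Finset.sum_sub_distrib]
  have key : ∀ j : Fin (n+1),
      (1 / ((1 + (m : ℝ)) * (1 + (n : ℝ)))) *
        Real.log ((1 / ((1 + (m : ℝ)) * (1 + (n : ℝ)))) / phat x y i j)
      - (1 / ((1 + (m : ℝ)) * (1 + (n : ℝ)))) *
        Real.log ((1 / ((1 + (m : ℝ)) * (1 + (n : ℝ)))) / ptilde x i j)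
      = (1 / ((1 + (m : ℝ)) * (1 + (n : ℝ)))) *
          (Real.log ((1 + (m : ℝ)) * ((((∑ j', (x i j' : ℕ)) : ℕ) : ℝ) + (1 + (n:ℝ)) / 2) /
              ((N : ℝ) + (1 + (m:ℝ)) * (1 + (n:ℝ)) / 2))
           - Real.log ((1 + (m : ℝ)) * ((((∑ j', (x i j' : ℕ)) + (y i : ℕ) : ℕ) : ℝ)
                + (1 + (n:ℝ)) / 2) /
              (((N + N' : ℕ) : ℝ) + (1 + (m:ℝ)) * (1 + (n:ℝ)) / 2))) := by
    intro j
    have hcast1 : ((((∑ j', (x i j' : ℕ)) + (y i : ℕ) : ℕ) : ℝ) + (1 + (n:ℝ)) / 2)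
        = (((∑ j', (x i j' : ℕ)) : ℕ) : ℝ) + (y i : ℝ) + (1 + (n:ℝ)) / 2 := by
      push_cast; ring
    have hcast2 : (((N + N' : ℕ) : ℝ) + (1 + (m:ℝ)) * (1 + (n:ℝ)) / 2)
        = (N : ℝ) + (N' : ℝ) + (1 + (m:ℝ)) * (1 + (n:ℝ)) / 2 := by
      push_cast; ring
    rw [hcast1, hcast2, phat, ptilde]
    exact log_alg (1 + (m:ℝ)) ((x i j : ℝ) + 1/2)
      ((((∑ j', (x i j' : ℕ)) : ℕ) : ℝ) + (1 + (n:ℝ)) / 2)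
      ((((∑ j', (x i j' : ℕ)) : ℕ) : ℝ) + (y i : ℝ) + (1 + (n:ℝ)) / 2)
      ((N : ℝ) + (1 + (m:ℝ)) * (1 + (n:ℝ)) / 2)
      ((N : ℝ) + (N' : ℝ) + (1 + (m:ℝ)) * (1 + (n:ℝ)) / 2)
      (1 / ((1 + (m : ℝ)) * (1 + (n : ℝ))))
      hm0 (by positivity) (by positivity) (by positivity) (by positivity) (by positivity) hq
  rw [Finset.sum_congr rfl (fun j _ => key j), Finset.sum_const, Finset.card_univ,
    Fintype.card_fin, nsmul_eq_mul]
  have : ((n+1 : ℕ) : ℝ) * (1 / ((1 + (m : ℝ)) * (1 + (n : ℝ)))) = 1/(1+(m:ℝ)) := by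
    push_cast
    field_simp
    ring
  rw [← mul_assoc, this]

lemma triple_swap {α β γ : Type*} [Fintype γ] (s : Finset α) (t : Finset β)
    (f : γ → α → β → ℝ) :
    ∑ x ∈ s, ∑ y ∈ t, ∑ i, f i x y = ∑ i, ∑ x ∈ s, ∑ y ∈ t, f i x y := by
  calc ∑ x ∈ s, ∑ y ∈ t, ∑ i, f i x y
      = ∑ x ∈ s, ∑ i, ∑ y ∈ t, f i x y :=
        Finset.sum_congr rfl (fun x _ => Finset.sum_comm)
    _ = ∑ i, ∑ x ∈ s, ∑ y ∈ t, f i x y := Finset.sum_comm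

lemma riskDiff_core (m n N N' : ℕ) (F G : ℕ → ℝ)
    (hFG : ∀ (x : Fin (m+1) → Fin (n+1) → Fin (N+1)) (y : Fin (m+1) → Fin (N'+1)),
      entropyLoss (phat x y) (fun _ _ => 1 / ((1 + (m : ℝ)) * (1 + (n : ℝ))))
        - entropyLoss (ptilde x) (fun _ _ => 1 / ((1 + (m : ℝ)) * (1 + (n : ℝ))))
      = ∑ i, (1/(1+(m:ℝ))) *
          (F (∑ j', (x i j' : ℕ)) - G ((∑ j', (x i j' : ℕ)) + (y i : ℕ)))) :
    riskDiff m n (fun _ _ => 1 / ((1 + (m:ℝ)) * (1 + (n:ℝ)))) N N'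
      = (∑ k ∈ range (N+1), binPMF N (1/(1+(m:ℝ))) k * F k)
        - (∑ s ∈ range (N+N'+1), binPMF (N+N') (1/(1+(m:ℝ))) s * G s) := by
  have hm0 : (0:ℝ) < 1 + (m:ℝ) := by positivity
  have hY1 : ∑ y ∈ suppY m N',
      wY (n := n) (fun _ _ => 1 / ((1 + (m:ℝ)) * (1 + (n:ℝ)))) y = 1 := by
    have h := EY_marginal m n N' 0 (fun _ => 1)
    simp only [mul_one] at h
    rw [h, sum_binPMF]
  have hone : ((m+1 : ℕ) : ℝ) * (1/(1+(m:ℝ))) = 1 := by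
    push_cast; field_simp; ring
  -- marginal computations
  have hIF : ∀ i : Fin (m+1), ∑ x ∈ suppX m n N, ∑ y ∈ suppY m N',
      (1/(1+(m:ℝ))) * (wX (fun _ _ => 1 / ((1 + (m:ℝ)) * (1 + (n:ℝ)))) x *
        wY (n := n) (fun _ _ => 1 / ((1 + (m:ℝ)) * (1 + (n:ℝ)))) y * F (∑ j', (x i j' : ℕ)))
      = (1/(1+(m:ℝ))) * ∑ k ∈ range (N+1), binPMF N (1/(1+(m:ℝ))) k * F k := by
    intro i
    have e1 : ∀ x ∈ suppX m n N, (∑ y ∈ suppY m N',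
        (1/(1+(m:ℝ))) * (wX (fun _ _ => 1 / ((1 + (m:ℝ)) * (1 + (n:ℝ)))) x *
          wY (n := n) (fun _ _ => 1 / ((1 + (m:ℝ)) * (1 + (n:ℝ)))) y * F (∑ j', (x i j' : ℕ))))
        = (1/(1+(m:ℝ))) * (wX (fun _ _ => 1 / ((1 + (m:ℝ)) * (1 + (n:ℝ)))) x *
            F (∑ j', (x i j' : ℕ))) := by
      intro x _
      have : ∀ y ∈ suppY m N',
          (1/(1+(m:ℝ))) * (wX (fun _ _ => 1 / ((1 + (m:ℝ)) * (1 + (n:ℝ)))) x *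
            wY (n := n) (fun _ _ => 1 / ((1 + (m:ℝ)) * (1 + (n:ℝ)))) y * F (∑ j', (x i j' : ℕ)))
          = ((1/(1+(m:ℝ))) * (wX (fun _ _ => 1 / ((1 + (m:ℝ)) * (1 + (n:ℝ)))) x *
              F (∑ j', (x i j' : ℕ)))) *
            wY (n := n) (fun _ _ => 1 / ((1 + (m:ℝ)) * (1 + (n:ℝ)))) y :=
        fun y _ => by ring
      rw [Finset.sum_congr rfl this, ← Finset.mul_sum, hY1, mul_one]
    rw [Finset.sum_congr rfl e1, ← Finset.mul_sum, EX_marginal m n N i F]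
  have hIG : ∀ i : Fin (m+1), ∑ x ∈ suppX m n N, ∑ y ∈ suppY m N',
      (1/(1+(m:ℝ))) * (wX (fun _ _ => 1 / ((1 + (m:ℝ)) * (1 + (n:ℝ)))) x *
        wY (n := n) (fun _ _ => 1 / ((1 + (m:ℝ)) * (1 + (n:ℝ)))) y *
          G ((∑ j', (x i j' : ℕ)) + (y i : ℕ)))
      = (1/(1+(m:ℝ))) * ∑ s ∈ range (N+N'+1), binPMF (N+N') (1/(1+(m:ℝ))) s * G s := by
    intro i
    have e1 : ∀ x ∈ suppX m n N, (∑ y ∈ suppY m N',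
        (1/(1+(m:ℝ))) * (wX (fun _ _ => 1 / ((1 + (m:ℝ)) * (1 + (n:ℝ)))) x *
          wY (n := n) (fun _ _ => 1 / ((1 + (m:ℝ)) * (1 + (n:ℝ)))) y *
            G ((∑ j', (x i j' : ℕ)) + (y i : ℕ))))
        = (1/(1+(m:ℝ))) * (wX (fun _ _ => 1 / ((1 + (m:ℝ)) * (1 + (n:ℝ)))) x *
            ((fun k => ∑ l ∈ range (N'+1), binPMF N' (1/(1+(m:ℝ))) l * G (k + l))
              (∑ j', (x i j' : ℕ)))) := by
      intro x _
      have h2 : ∑ y ∈ suppY m N',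
          wY (n := n) (fun _ _ => 1 / ((1 + (m:ℝ)) * (1 + (n:ℝ)))) y *
            G ((∑ j', (x i j' : ℕ)) + (y i : ℕ))
          = ∑ l ∈ range (N'+1), binPMF N' (1/(1+(m:ℝ))) l *
              G ((∑ j', (x i j' : ℕ)) + l) :=
        EY_marginal m n N' i (fun l => G ((∑ j', (x i j' : ℕ)) + l))
      have e2 : ∀ y ∈ suppY m N',
          (1/(1+(m:ℝ))) * (wX (fun _ _ => 1 / ((1 + (m:ℝ)) * (1 + (n:ℝ)))) x *
            wY (n := n) (fun _ _ => 1 / ((1 + (m:ℝ)) * (1 + (n:ℝ)))) y *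
              G ((∑ j', (x i j' : ℕ)) + (y i : ℕ)))
          = ((1/(1+(m:ℝ))) * wX (fun _ _ => 1 / ((1 + (m:ℝ)) * (1 + (n:ℝ)))) x) *
            (wY (n := n) (fun _ _ => 1 / ((1 + (m:ℝ)) * (1 + (n:ℝ)))) y *
              G ((∑ j', (x i j' : ℕ)) + (y i : ℕ))) :=
        fun y _ => by ring
      rw [Finset.sum_congr rfl e2, ← Finset.mul_sum, h2]
      simp only []
      ring
    rw [Finset.sum_congr rfl e1, ← Finset.mul_sum,
      EX_marginal m n N i (fun k => ∑ l ∈ range (N'+1), binPMF N' (1/(1+(m:ℝ))) l * G (k + l))]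
    congr 1
    rw [← binPMF_conv N N' (1/(1+(m:ℝ))) G]
    apply Finset.sum_congr rfl
    intro k _
    rw [Finset.mul_sum]
    exact Finset.sum_congr rfl (fun l _ => by ring)
  -- main rewriting
  rw [riskDiff]
  have step1 : ∀ x ∈ suppX m n N, ∀ y ∈ suppY m N',
      wX (fun _ _ => 1 / ((1 + (m:ℝ)) * (1 + (n:ℝ)))) x *
        wY (n := n) (fun _ _ => 1 / ((1 + (m:ℝ)) * (1 + (n:ℝ)))) y *
        (entropyLoss (phat x y) (fun _ _ => 1 / ((1 + (m:ℝ)) * (1 + (n:ℝ))))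
          - entropyLoss (ptilde x) (fun _ _ => 1 / ((1 + (m:ℝ)) * (1 + (n:ℝ)))))
      = ∑ i, ((fun (i : Fin (m+1)) (x : Fin (m+1) → Fin (n+1) → Fin (N+1))
            (y : Fin (m+1) → Fin (N'+1)) =>
          (1/(1+(m:ℝ))) * (wX (fun _ _ => 1 / ((1 + (m:ℝ)) * (1 + (n:ℝ)))) x *
              wY (n := n) (fun _ _ => 1 / ((1 + (m:ℝ)) * (1 + (n:ℝ)))) y *
                F (∑ j', (x i j' : ℕ)))
          - (1/(1+(m:ℝ))) * (wX (fun _ _ => 1 / ((1 + (m:ℝ)) * (1 + (n:ℝ)))) x *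
              wY (n := n) (fun _ _ => 1 / ((1 + (m:ℝ)) * (1 + (n:ℝ)))) y *
                G ((∑ j', (x i j' : ℕ)) + (y i : ℕ)))) i x y) := by
    intro x _ y _
    rw [hFG x y, Finset.mul_sum]
    exact Finset.sum_congr rfl (fun i _ => by ring)
  rw [Finset.sum_congr rfl (fun x hx => Finset.sum_congr rfl (fun y hy => step1 x hx y hy))]
  rw [triple_swap]
  have step2 : ∀ i : Fin (m+1),
      (∑ x ∈ suppX m n N, ∑ y ∈ suppY m N',
        ((1/(1+(m:ℝ))) * (wX (fun _ _ => 1 / ((1 + (m:ℝ)) * (1 + (n:ℝ)))) x *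
              wY (n := n) (fun _ _ => 1 / ((1 + (m:ℝ)) * (1 + (n:ℝ)))) y *
                F (∑ j', (x i j' : ℕ)))
          - (1/(1+(m:ℝ))) * (wX (fun _ _ => 1 / ((1 + (m:ℝ)) * (1 + (n:ℝ)))) x *
              wY (n := n) (fun _ _ => 1 / ((1 + (m:ℝ)) * (1 + (n:ℝ)))) y *
                G ((∑ j', (x i j' : ℕ)) + (y i : ℕ)))))
      = (1/(1+(m:ℝ))) * ∑ k ∈ range (N+1), binPMF N (1/(1+(m:ℝ))) k * F k
        - (1/(1+(m:ℝ))) * ∑ s ∈ range (N+N'+1), binPMF (N+N') (1/(1+(m:ℝ))) s * G s := by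
    intro i
    rw [Finset.sum_congr rfl (fun x (_ : x ∈ suppX m n N) => Finset.sum_sub_distrib _ _),
      Finset.sum_sub_distrib, hIF i, hIG i]
  rw [Finset.sum_congr rfl (fun i _ => step2 i), Finset.sum_const, Finset.card_univ,
    Fintype.card_fin, nsmul_eq_mul]
  calc ((m+1 : ℕ) : ℝ) *
      ((1/(1+(m:ℝ))) * ∑ k ∈ range (N+1), binPMF N (1/(1+(m:ℝ))) k * F k
        - (1/(1+(m:ℝ))) * ∑ s ∈ range (N+N'+1), binPMF (N+N') (1/(1+(m:ℝ))) s * G s)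
      = (((m+1 : ℕ) : ℝ) * (1/(1+(m:ℝ)))) * (∑ k ∈ range (N+1), binPMF N (1/(1+(m:ℝ))) k * F k)
        - (((m+1 : ℕ) : ℝ) * (1/(1+(m:ℝ)))) *
            (∑ s ∈ range (N+N'+1), binPMF (N+N') (1/(1+(m:ℝ))) s * G s) := by ring
    _ = _ := by rw [hone, one_mul, one_mul]

end Aux

open Filter in
theorem risk_difference_limit_large_aggregated (m n N : ℕ)
    (hm : 1 ≤ m) (hn : 1 ≤ n) (hN : 1 ≤ N) :
    Tendsto
        (fun N' : ℕ => riskDiff m n (fun _ _ => 1 / ((1 + (m : ℝ)) * (1 + (n : ℝ)))) N N')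
        atTop
        (nhds (∑ x ∈ Finset.range (N+1),
          binPMF N (1 / (1 + (m : ℝ))) x *
            Real.log ((1 + (m : ℝ)) * ((x : ℝ) + (1 + n) / 2) /
              ((N : ℝ) + (1 + m) * (1 + n) / 2)))) ∧
      (∑ x ∈ Finset.range (N+1),
          binPMF N (1 / (1 + (m : ℝ))) x *
            Real.log ((1 + (m : ℝ)) * ((x : ℝ) + (1 + n) / 2) /
              ((N : ℝ) + (1 + m) * (1 + n) / 2))) < 0 := by
  have hEq : ∀ N' : ℕ, riskDiff m n (fun _ _ => 1 / ((1 + (m:ℝ)) * (1 + (n:ℝ)))) N N'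
      = Bfun m n N - Bfun m n (N+N') := by
    intro N'
    exact riskDiff_core m n N N'
      (fun s => Real.log ((1 + (m : ℝ)) * ((s : ℝ) + (1 + (n:ℝ)) / 2) /
        ((N : ℝ) + (1 + (m:ℝ)) * (1 + (n:ℝ)) / 2)))
      (fun s => Real.log ((1 + (m : ℝ)) * ((s : ℝ) + (1 + (n:ℝ)) / 2) /
        (((N + N' : ℕ) : ℝ) + (1 + (m:ℝ)) * (1 + (n:ℝ)) / 2)))
      (fun x y => entropy_diff m n N N' x y)
  constructor
  · have h1 : Tendsto (fun N' : ℕ => N + N') atTop atTop := by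
      have h := tendsto_add_atTop_nat N
      simpa [Nat.add_comm] using h
    have h2 : Tendsto (fun N' : ℕ => Bfun m n (N + N')) atTop (nhds 0) :=
      (Bfun_tendsto m n).comp h1
    have h3 : Tendsto (fun N' : ℕ => Bfun m n N - Bfun m n (N + N')) atTop
        (nhds (Bfun m n N - 0)) := tendsto_const_nhds.sub h2
    rw [sub_zero] at h3
    exact h3.congr (fun N' => (hEq N').symm)
  · exact A_neg m n N hm hN
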